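/- Let σ > 0, L > 0, r > 0, and let Z ~ N(0, σ²). Then (1/(2σ²)) · E[min{r·|Z|, 2L·Z²}] = L · erf(r / (2^{3/2} L σ)). -/

import Mathlib

open MeasureTheory ProbabilityTheory

/-- The Gauss error function. -/
noncomputable def erf (t : ℝ) : ℝ :=
  (2 / Real.sqrt Real.pi) * ∫ s in (0:ℝ)..t, Real.exp (-s ^ 2)

open Real Set Filter in
private lemma aux_Ioi (c a : ℝ) (hc : 0 < c) :
    ∫ t in Ioi a, t * Real.exp (-(c * t^2)) = (2*c)⁻¹ * Real.exp (-(c*a^2)) := by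
  have hderiv : ∀ x ∈ Ici a, HasDerivAt (fun t => -(2*c)⁻¹ * Real.exp (-(c*t^2)))
      (x * Real.exp (-(c*x^2))) x := by
    intro x _
    have h1 : HasDerivAt (fun t : ℝ => -(c*t^2)) (-(c*(2*x))) x := by
      exact (((hasDerivAt_pow 2 x).const_mul c).neg).congr_deriv (by norm_num)
    have h2 := (h1.exp).const_mul (-(2*c)⁻¹)
    refine h2.congr_deriv ?_
    field_simp
  have hint : IntegrableOn (fun t => t * Real.exp (-(c*t^2))) (Ioi a) := by
    have := integrable_mul_exp_neg_mul_sq hc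
    simpa [neg_mul] using this.integrableOn
  have htend : Tendsto (fun t => -(2*c)⁻¹ * Real.exp (-(c*t^2))) atTop (nhds 0) := by
    have h0 : Tendsto (fun t : ℝ => -(c * t^2)) atTop atBot := by
      have := (tendsto_pow_atTop (n := 2) (by norm_num)).const_mul_atTop hc
      exact tendsto_neg_atBot_iff.mpr this
    have := (Real.tendsto_exp_atBot.comp h0).const_mul (-(2*c)⁻¹)
    simpa using this
  have hcont : ContinuousWithinAt (fun t => -(2*c)⁻¹ * Real.exp (-(c*t^2))) (Ici a) a := by
    apply Continuous.continuousWithinAt; continuity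
  have := integral_Ioi_of_hasDerivAt_of_tendsto hcont
    (fun x hx => hderiv x (Set.mem_of_mem_of_subset hx Set.Ioi_subset_Ici_self)) hint htend
  rw [this]; ring

open Real Set Filter in
private lemma aux_sq (c a : ℝ) (hc : 0 < c) :
    ∫ t in (0:ℝ)..a, t^2 * Real.exp (-(c * t^2)) =
      -(2*c)⁻¹ * a * Real.exp (-(c*a^2)) + (2*c)⁻¹ * ∫ s in (0:ℝ)..a, Real.exp (-(c*s^2)) := by
  have hcont : Continuous fun s : ℝ => Real.exp (-(c*s^2)) := by continuity
  have hderiv : ∀ x ∈ Set.uIcc (0:ℝ) a,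
      HasDerivAt (fun t => -(2*c)⁻¹ * t * Real.exp (-(c*t^2))
        + (2*c)⁻¹ * ∫ s in (0:ℝ)..t, Real.exp (-(c*s^2)))
      (x^2 * Real.exp (-(c*x^2))) x := by
    intro x _
    have h1 : HasDerivAt (fun t : ℝ => -(c*t^2)) (-(c*(2*x))) x := by
      exact (((hasDerivAt_pow 2 x).const_mul c).neg).congr_deriv (by norm_num)
    have h2 : HasDerivAt (fun t : ℝ => -(2*c)⁻¹ * t * Real.exp (-(c*t^2)))
        (-(2*c)⁻¹ * Real.exp (-(c*x^2)) + -(2*c)⁻¹ * x * (Real.exp (-(c*x^2)) * (-(c*(2*x))))) x := by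
      have := ((hasDerivAt_id x).const_mul (-(2*c)⁻¹)).mul h1.exp
      refine this.congr_deriv ?_
      simp only [id_eq]; ring
    have h3 : HasDerivAt (fun t : ℝ => (2*c)⁻¹ * ∫ s in (0:ℝ)..t, Real.exp (-(c*s^2)))
        ((2*c)⁻¹ * Real.exp (-(c*x^2))) x :=
      (hcont.integral_hasStrictDerivAt 0 x).hasDerivAt.const_mul _
    have := h2.add h3
    refine this.congr_deriv ?_
    field_simp
    ring
  have hiint : IntervalIntegrable (fun x => x^2 * Real.exp (-(c*x^2))) volume 0 a := by
    apply Continuous.intervalIntegrable; continuity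
  rw [intervalIntegral.integral_eq_sub_of_hasDerivAt hderiv hiint]
  simp

open Real Set Filter in
private lemma aux_subst (c a : ℝ) (hc : 0 < c) :
    ∫ s in (0:ℝ)..a, Real.exp (-(c*s^2)) =
      (Real.sqrt c)⁻¹ * ∫ u in (0:ℝ)..(a * Real.sqrt c), Real.exp (-u^2) := by
  have hsc : Real.sqrt c ≠ 0 := by positivity
  have h := intervalIntegral.integral_comp_mul_right (a := 0) (b := a)
    (fun u => Real.exp (-u^2)) hsc
  rw [zero_mul, smul_eq_mul] at h
  rw [← h]
  congr 1 with s
  show Real.exp (-(c*s^2)) = Real.exp (-(s*Real.sqrt c)^2)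
  rw [mul_pow, Real.sq_sqrt hc.le]
  ring_nf

open Real Set Filter in
/-- Exact Gaussian expectation: for `Z ~ N(0, σ²)`,
`(1/(2σ²)) E[min{r|Z|, 2L Z²}] = L · erf(r / (2^{3/2} L σ))`. -/
theorem gaussian_min_expectation_eq (σ L r : ℝ) (hσ : 0 < σ) (hL : 0 < L) (hr : 0 < r) :
    (1 / (2 * σ ^ 2)) *
        ∫ z, min (r * |z|) (2 * L * z ^ 2) ∂(gaussianReal 0 (Real.toNNReal (σ ^ 2))) =
      L * erf (r / (2 ^ ((3 : ℝ) / 2) * L * σ)) := by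
  have hσ2 : (0:ℝ) < σ^2 := by positivity
  set v : NNReal := Real.toNNReal (σ^2) with hvdef
  have hv0 : v ≠ 0 := by
    simp only [hvdef, ne_eq, Real.toNNReal_eq_zero, not_le]
    exact hσ2
  have hvcoe : (v:ℝ) = σ^2 := Real.coe_toNNReal _ hσ2.le
  set c : ℝ := (2*σ^2)⁻¹ with hcdef
  have hc : 0 < c := by positivity
  set a : ℝ := r/(2*L) with hadef
  have ha : 0 < a := by positivity
  set N : ℝ := (Real.sqrt (2*Real.pi*σ^2))⁻¹ with hNdef
  have hpdf : ∀ t, gaussianPDFReal 0 v t = N * Real.exp (-(c*t^2)) := by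
    intro t
    rw [gaussianPDFReal]
    rw [hvcoe, sub_zero]
    congr 1
    rw [hcdef]
    ring
  -- Step 1: to Lebesgue integral with density
  have step1 : ∫ z, min (r * |z|) (2 * L * z ^ 2) ∂(gaussianReal 0 v)
      = ∫ z, gaussianPDFReal 0 v z * min (r * |z|) (2 * L * z ^ 2) := by
    rw [gaussianReal_of_var_ne_zero _ hv0]
    have hmeas : Measurable fun x => Real.toNNReal (gaussianPDFReal 0 v x) :=
      (measurable_gaussianPDFReal 0 v).real_toNNReal
    rw [show gaussianPDF 0 v = fun x => ((Real.toNNReal (gaussianPDFReal 0 v x)) : ENNReal) from rfl,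
      integral_withDensity_eq_integral_smul hmeas _]
    congr 1; funext x
    rw [NNReal.smul_def, Real.coe_toNNReal _ (gaussianPDFReal_nonneg 0 v x), smul_eq_mul]
  -- Step 2: evenness
  have step2 : ∫ z, gaussianPDFReal 0 v z * min (r * |z|) (2 * L * z ^ 2)
      = 2 * ∫ t in Ioi (0:ℝ), N * Real.exp (-(c*t^2)) * min (r*t) (2*L*t^2) := by
    rw [← integral_comp_abs (f := fun t => N * Real.exp (-(c*t^2)) * min (r*t) (2*L*t^2))]
    congr 1 with z
    rw [hpdf z, sq_abs]
  -- Step 3: split the half-line integral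
  have hmin1 : ∀ t ∈ Ioc (0:ℝ) a, N * Real.exp (-(c*t^2)) * min (r*t) (2*L*t^2)
      = N*(2*L) * (t^2 * Real.exp (-(c*t^2))) := by
    intro t ht
    have h1 : 0 < t := ht.1
    have h2 : t ≤ a := ht.2
    have : 2*L*t^2 ≤ r*t := by
      rw [hadef, le_div_iff₀ (by positivity)] at h2
      nlinarith
    rw [min_eq_right this]; ring
  have hmin2 : ∀ t ∈ Ioi a, N * Real.exp (-(c*t^2)) * min (r*t) (2*L*t^2)
      = N*r * (t * Real.exp (-(c*t^2))) := by
    intro t ht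
    have h2 : a < t := ht
    have : r*t ≤ 2*L*t^2 := by
      rw [hadef, div_lt_iff₀ (by positivity)] at h2
      nlinarith
    rw [min_eq_left this]; ring
  have hcontmin : Continuous fun t : ℝ => N * Real.exp (-(c*t^2)) * min (r*t) (2*L*t^2) := by
    have h1 : Continuous fun t : ℝ => N * Real.exp (-(c*t^2)) := by fun_prop
    have h2 : Continuous fun t : ℝ => min (r*t) (2*L*t^2) :=
      Continuous.min (by fun_prop) (by fun_prop)
    exact h1.mul h2
  have hi1 : IntegrableOn (fun t => N * Real.exp (-(c*t^2)) * min (r*t) (2*L*t^2)) (Ioc 0 a) :=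
    hcontmin.integrableOn_Ioc
  have hi2base : IntegrableOn (fun t => N*r * (t * Real.exp (-(c*t^2)))) (Ioi a) := by
    have := (integrable_mul_exp_neg_mul_sq hc).const_mul (N*r)
    simpa [neg_mul, mul_assoc] using this.integrableOn
  have hi2 : IntegrableOn (fun t => N * Real.exp (-(c*t^2)) * min (r*t) (2*L*t^2)) (Ioi a) := by
    apply hi2base.congr_fun _ measurableSet_Ioi
    intro t ht
    exact (hmin2 t ht).symm
  have step3 : ∫ t in Ioi (0:ℝ), N * Real.exp (-(c*t^2)) * min (r*t) (2*L*t^2)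
      = (∫ t in Ioc (0:ℝ) a, N*(2*L) * (t^2 * Real.exp (-(c*t^2))))
        + ∫ t in Ioi a, N*r * (t * Real.exp (-(c*t^2))) := by
    rw [← Ioc_union_Ioi_eq_Ioi ha.le,
      setIntegral_union (Ioc_disjoint_Ioi le_rfl) measurableSet_Ioi hi1 hi2]
    congr 1
    · exact setIntegral_congr_fun measurableSet_Ioc hmin1
    · exact setIntegral_congr_fun measurableSet_Ioi hmin2
  -- Step 4: evaluate the two integrals
  have hIoc : ∫ t in Ioc (0:ℝ) a, N*(2*L) * (t^2 * Real.exp (-(c*t^2)))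
      = N*(2*L) * (-(2*c)⁻¹ * a * Real.exp (-(c*a^2))
          + (2*c)⁻¹ * ((Real.sqrt c)⁻¹ * ∫ u in (0:ℝ)..(a * Real.sqrt c), Real.exp (-u^2))) := by
    rw [integral_const_mul _ _, ← intervalIntegral.integral_of_le ha.le, aux_sq c a hc,
      aux_subst c a hc]
  have hIoi : ∫ t in Ioi a, N*r * (t * Real.exp (-(c*t^2)))
      = N*r * ((2*c)⁻¹ * Real.exp (-(c*a^2))) := by
    rw [integral_const_mul _ _, aux_Ioi c a hc]
  -- identify the endpoint with the erf argument
  have h32 : (2:ℝ)^((3:ℝ)/2) = 2 * Real.sqrt 2 := by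
    rw [show (3:ℝ)/2 = 1 + 1/2 by norm_num, Real.rpow_add two_pos, Real.rpow_one,
      ← Real.sqrt_eq_rpow]
  have hsqrtc : Real.sqrt c = (Real.sqrt 2 * σ)⁻¹ := by
    rw [hcdef, Real.sqrt_inv, Real.sqrt_mul (by norm_num : (0:ℝ) ≤ 2), Real.sqrt_sq hσ.le]
  have hb : a * Real.sqrt c = r / (2^((3:ℝ)/2) * L * σ) := by
    rw [hsqrtc, hadef, h32]
    have h2 : Real.sqrt 2 ≠ 0 := by positivity
    field_simp
  -- key constant identity
  have hNkey : N = (Real.sqrt Real.pi)⁻¹ * Real.sqrt c := by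
    rw [hNdef, hsqrtc, show 2*Real.pi*σ^2 = Real.pi * (Real.sqrt 2 * σ)^2 by
      rw [mul_pow, Real.sq_sqrt (by norm_num : (0:ℝ) ≤ 2)]; ring,
      Real.sqrt_mul Real.pi_nonneg, Real.sqrt_sq (by positivity)]
    rw [mul_inv]
  -- assemble
  rw [step1, step2, step3, hIoc, hIoi, hb, erf]
  have hr2L : r = 2*L*a := by rw [hadef]; field_simp
  rw [show (1:ℝ)/(2*σ^2) = c by rw [hcdef, one_div]]
  rw [hNkey]
  have hπ : Real.sqrt Real.pi ≠ 0 := by positivity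
  have hsc : Real.sqrt c ≠ 0 := by positivity
  rw [hr2L]
  field_simp
  ring
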